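/- Let M ≥ 1, E = 2M and n be natural numbers with M < n ≤ E, and let ω ≥ 1. For X drawn from the uniform distribution on the space Fin ω → Fin E (ω independent uniform draws from {0,…,E−1}), the probability of the event that some draw is smaller than n and the first such draw lies in [M, n) equals ((n − M)/n) · (1 − ((E − n)/E)^ω). This is the probability that BinomialHash assigns a key to a bucket of the lowest (partially filled) level of the tree. -/

import Mathlib

open Finset

private lemma card_filter_lt' (e k : ℕ) (h : k ≤ e) :
    ((Finset.univ : Finset (Fin e)).filter fun x : Fin e => (x : ℕ) < k).card = k := by
  have heq : ((Finset.univ : Finset (Fin e)).filter fun x : Fin e => (x : ℕ) < k)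
      = (Finset.univ : Finset (Fin k)).map (Fin.castLEEmb h) := by
    ext x
    simp only [mem_filter, mem_univ, true_and, mem_map, Fin.castLEEmb]
    constructor
    · intro hx; exact ⟨⟨x, hx⟩, by simp [Fin.castLE, Fin.ext_iff]⟩
    · rintro ⟨y, -, rfl⟩; simp
  rw [heq, card_map, card_univ, Fintype.card_fin]

private lemma card_filter_le' (e k : ℕ) (h : k ≤ e) :
    ((Finset.univ : Finset (Fin e)).filter fun x : Fin e => k ≤ (x : ℕ)).card = e - k := by
  have h1 := Finset.card_filter_add_card_filter_not
    (s := (Finset.univ : Finset (Fin e))) (p := fun x : Fin e => (x : ℕ) < k)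
  rw [card_filter_lt' e k h, card_univ, Fintype.card_fin] at h1
  have h2 : ((Finset.univ : Finset (Fin e)).filter fun x : Fin e => ¬ (x : ℕ) < k)
      = ((Finset.univ : Finset (Fin e)).filter fun x : Fin e => k ≤ (x : ℕ)) := by
    apply filter_congr; intro x _; simp [not_lt]
  rw [h2] at h1
  omega

private lemma card_filter_between' (e m k : ℕ) (hm : m ≤ k) (h : k ≤ e) :
    ((Finset.univ : Finset (Fin e)).filter
      fun x : Fin e => m ≤ (x : ℕ) ∧ (x : ℕ) < k).card = k - m := by
  have h1 := Finset.card_filter_add_card_filter_not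
    (s := (Finset.univ : Finset (Fin e)).filter fun x : Fin e => (x : ℕ) < k)
    (p := fun x : Fin e => (x : ℕ) < m)
  rw [Finset.filter_filter, Finset.filter_filter, card_filter_lt' e k h] at h1
  have h2 : ((Finset.univ : Finset (Fin e)).filter fun x : Fin e => (x : ℕ) < k ∧ (x : ℕ) < m)
      = ((Finset.univ : Finset (Fin e)).filter fun x : Fin e => (x : ℕ) < m) := by
    apply filter_congr; intro x _; omega
  have h3 : ((Finset.univ : Finset (Fin e)).filter fun x : Fin e => (x : ℕ) < k ∧ ¬ (x : ℕ) < m)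
      = ((Finset.univ : Finset (Fin e)).filter fun x : Fin e => m ≤ (x : ℕ) ∧ (x : ℕ) < k) := by
    apply filter_congr; intro x _; omega
  rw [h2, h3, card_filter_lt' e m (hm.trans h)] at h1
  omega

private lemma lowest_level_count (M n E ω : ℕ) (hMn : M < n) (hnE : n ≤ E) :
    Nat.card ↥{X : Fin ω → Fin E | ∃ i : Fin ω, (X i : ℕ) < n ∧
      (∀ j : Fin ω, j < i → n ≤ (X j : ℕ)) ∧ M ≤ (X i : ℕ)}
    = ∑ i ∈ Finset.range ω, (E - n)^i * (n - M) * E^(ω - 1 - i) := by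
  classical
  rw [Nat.card_eq_fintype_card]
  set t : Fin ω → Fin ω → Finset (Fin E) := fun i j =>
    if j < i then Finset.univ.filter (fun x : Fin E => n ≤ (x : ℕ))
    else if j = i then Finset.univ.filter (fun x : Fin E => M ≤ (x : ℕ) ∧ (x : ℕ) < n)
    else Finset.univ with ht
  set A : Fin ω → Finset (Fin ω → Fin E) := fun i => Fintype.piFinset (t i) with hA
  rw [Fintype.card_subtype]
  have hfilter : (Finset.univ.filter fun X : Fin ω → Fin E => ∃ i : Fin ω, (X i : ℕ) < n ∧
      (∀ j : Fin ω, j < i → n ≤ (X j : ℕ)) ∧ M ≤ (X i : ℕ)) = Finset.univ.biUnion A := by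
    ext X
    simp only [mem_filter, mem_univ, true_and, mem_biUnion, hA, Fintype.mem_piFinset, ht]
    constructor
    · rintro ⟨i, h1, h2, h3⟩
      refine ⟨i, fun j => ?_⟩
      split_ifs with hj hj'
      · simpa using h2 j hj
      · subst hj'; simp only [mem_filter, mem_univ, true_and]; exact ⟨h3, h1⟩
      · simp
    · rintro ⟨i, h⟩
      have hi := h i
      rw [if_neg (lt_irrefl i), if_pos rfl, mem_filter] at hi
      refine ⟨i, hi.2.2, fun j hj => ?_, hi.2.1⟩
      have hjj := h j
      rw [if_pos hj, mem_filter] at hjj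
      exact hjj.2
  simp only [Set.mem_setOf_eq]
  rw [hfilter, Finset.card_biUnion]
  · have hcardA : ∀ i : Fin ω, (A i).card = (E - n)^(i : ℕ) * (n - M) * E^(ω - 1 - (i : ℕ)) := by
      intro i
      simp only [hA]
      rw [Fintype.card_piFinset]
      have hc : ∀ j : Fin ω, (t i j).card
          = if j < i then E - n else if j = i then n - M else E := by
        intro j
        simp only [ht]
        split_ifs with h h'
        · exact card_filter_le' E n hnE
        · exact card_filter_between' E M n hMn.le hnE
        · simp
      rw [Finset.prod_congr rfl fun j _ => hc j, Finset.prod_ite, Finset.prod_const,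
        Finset.prod_ite, Finset.prod_const, Finset.prod_const]
      have c1 : (Finset.univ.filter fun j : Fin ω => j < i).card = (i : ℕ) := by
        rw [show (Finset.univ.filter fun j : Fin ω => j < i)
            = Finset.univ.filter fun j : Fin ω => (j : ℕ) < (i : ℕ) by
          apply filter_congr; intro j _; exact Iff.rfl]
        exact card_filter_lt' ω i i.isLt.le
      have c2 : ((Finset.univ.filter fun j : Fin ω => ¬ j < i).filter
          fun j : Fin ω => j = i).card = 1 := by
        rw [Finset.filter_filter]
        rw [show (Finset.univ.filter fun j : Fin ω => ¬ j < i ∧ j = i) = {i} by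
          ext j
          simp only [mem_filter, mem_univ, true_and, mem_singleton]
          exact ⟨fun h => h.2, fun h => ⟨by simp [h], h⟩⟩]
        exact Finset.card_singleton i
      have c3 : ((Finset.univ.filter fun j : Fin ω => ¬ j < i).filter
          fun j : Fin ω => ¬ j = i).card = ω - 1 - (i : ℕ) := by
        rw [Finset.filter_filter]
        rw [show (Finset.univ.filter fun j : Fin ω => ¬ j < i ∧ ¬ j = i)
            = Finset.univ.filter fun j : Fin ω => (i : ℕ) + 1 ≤ (j : ℕ) by
          apply filter_congr; intro j _
          simp only [Fin.lt_def, Fin.ext_iff]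
          omega]
        rw [card_filter_le' ω ((i : ℕ) + 1) i.isLt]
        omega
      rw [c1, c2, c3, pow_one]
      ring
    rw [Finset.sum_congr rfl fun i _ => hcardA i, ← Fin.sum_univ_eq_sum_range]
  · intro i _ j _ hij
    rw [Function.onFun, Finset.disjoint_left]
    intro X hXi hXj
    rcases lt_or_gt_of_ne hij with hlt | hlt
    · have h1 := Fintype.mem_piFinset.mp hXi i
      have h2 := Fintype.mem_piFinset.mp hXj i
      simp only [ht] at h1 h2
      simp only [hlt, if_pos, lt_irrefl, if_true, if_false, mem_filter, mem_univ, true_and,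
        if_neg (lt_irrefl i), if_pos rfl] at h1 h2
      omega
    · have h1 := Fintype.mem_piFinset.mp hXi j
      have h2 := Fintype.mem_piFinset.mp hXj j
      simp only [ht] at h1 h2
      simp only [hlt, if_pos, lt_irrefl, if_true, if_false, mem_filter, mem_univ, true_and,
        if_neg (lt_irrefl j), if_pos rfl] at h1 h2
      omega

private lemma lowest_level_arith (a q nn e ω : ℕ) (hq : nn + q = e) (h0 : 0 < nn) :
    ((∑ i ∈ Finset.range ω, q ^ i * a * e ^ (ω - 1 - i) : ℕ) : ENNReal) / ((e ^ ω : ℕ) : ENNReal)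
      = ((a : ENNReal) / (nn : ENNReal)) * (1 - ((q : ENNReal) / (e : ENNReal)) ^ ω) := by
  have he : 0 < e := by omega
  have heE : ((e : ENNReal)) ≠ 0 := by simpa using he.ne'
  have hqe : ((q : ENNReal) / e) ≤ 1 := by
    rw [ENNReal.div_le_iff heE (ENNReal.natCast_ne_top e), one_mul]
    exact_mod_cast Nat.cast_le.mpr (by omega : q ≤ e)
  have hle : ((q : ENNReal) / e) ^ ω ≤ 1 := pow_le_one' hqe ω
  have hL : ((∑ i ∈ Finset.range ω, q ^ i * a * e ^ (ω - 1 - i) : ℕ) : ENNReal)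
      / ((e ^ ω : ℕ) : ENNReal) ≠ ⊤ := by
    refine (ENNReal.div_lt_top (ENNReal.natCast_ne_top _) ?_).ne
    simpa using pow_ne_zero ω he.ne'
  have hR : ((a : ENNReal) / (nn : ENNReal)) * (1 - ((q : ENNReal) / (e : ENNReal)) ^ ω) ≠ ⊤ := by
    apply ENNReal.mul_ne_top
    · exact (ENNReal.div_lt_top (ENNReal.natCast_ne_top _) (by simpa using h0.ne')).ne
    · exact ne_top_of_le_ne_top ENNReal.one_ne_top tsub_le_self
  rw [← ENNReal.toReal_eq_toReal_iff' hL hR]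
  rw [ENNReal.toReal_div, ENNReal.toReal_mul, ENNReal.toReal_div,
    ENNReal.toReal_sub_of_le hle ENNReal.one_ne_top, ENNReal.toReal_pow, ENNReal.toReal_div]
  rw [ENNReal.toReal_one]
  simp only [ENNReal.toReal_natCast]
  have key : (∑ i ∈ Finset.range ω, (q : ℝ) ^ i * (e : ℝ) ^ (ω - 1 - i)) * ((q : ℝ) - e)
      = (q : ℝ) ^ ω - (e : ℝ) ^ ω := geom_sum₂_mul (q : ℝ) (e : ℝ) ω
  have hsum : ((∑ i ∈ Finset.range ω, q ^ i * a * e ^ (ω - 1 - i) : ℕ) : ℝ)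
      = (a : ℝ) * ∑ i ∈ Finset.range ω, (q : ℝ) ^ i * (e : ℝ) ^ (ω - 1 - i) := by
    push_cast
    rw [Finset.mul_sum]
    exact Finset.sum_congr rfl fun i _ => by ring
  rw [hsum]
  have hnn : (nn : ℝ) = (e : ℝ) - q := by
    have := congrArg (Nat.cast : ℕ → ℝ) hq
    push_cast at this
    linarith
  have he' : (e : ℝ) ≠ 0 := by positivity
  have hn' : (nn : ℝ) ≠ 0 := by positivity
  have heq : (e : ℝ) - q ≠ 0 := by rw [← hnn]; exact hn'
  have hS : (∑ i ∈ Finset.range ω, (q : ℝ) ^ i * (e : ℝ) ^ (ω - 1 - i))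
      = ((e : ℝ) ^ ω - (q : ℝ) ^ ω) / ((e : ℝ) - q) := by
    rw [eq_div_iff heq]
    linear_combination -key
  rw [hS, hnn, div_pow]
  have hepow : (e : ℝ) ^ ω ≠ 0 := pow_ne_zero _ he'
  field_simp
  push_cast
  ring

/-- For `X` drawn uniformly from `Fin ω → Fin E` (`ω` independent uniform draws
from `{0,…,E−1}`), the probability that some draw is smaller than `n` and the
first such draw lies in `[M, n)` equals `((n−M)/n)·(1−((E−n)/E)^ω)`: this is the
probability that BinomialHash assigns a key to the lowest level of the tree. -/
theorem lowest_level_probability (M n E ω : ℕ) (hM : 1 ≤ M) (hE : E = 2 * M)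
    (hMn : M < n) (hnE : n ≤ E) (hω : 1 ≤ ω) :
    (@PMF.uniformOfFintype (Fin ω → Fin E) _
        ⟨fun _ => ⟨0, by omega⟩⟩).toMeasure
      {X | ∃ i : Fin ω, (X i : ℕ) < n ∧ (∀ j : Fin ω, j < i → n ≤ (X j : ℕ)) ∧
          M ≤ (X i : ℕ)}
      = (((n - M : ℕ) : ENNReal) / (n : ℕ)) *
          (1 - (((E - n : ℕ) : ENNReal) / (E : ℕ)) ^ ω) := by
  classical
  have hmeas : MeasurableSet {X : Fin ω → Fin E | ∃ i : Fin ω, (X i : ℕ) < n ∧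
      (∀ j : Fin ω, j < i → n ≤ (X j : ℕ)) ∧ M ≤ (X i : ℕ)} :=
    (Set.toFinite _).measurableSet
  have hne : Nonempty (Fin ω → Fin E) := ⟨fun _ => ⟨0, by omega⟩⟩
  rw [PMF.toMeasure_uniformOfFintype_apply _ hmeas]
  rw [Fintype.card_fun, Fintype.card_fin, Fintype.card_fin]
  simp only [← Nat.card_eq_fintype_card]
  rw [lowest_level_count M n E ω hMn hnE]
  exact lowest_level_arith (n - M) (E - n) n E ω (by omega) (by omega)
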